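/- Let G = (V, E) be a finite directed graph in which every vertex has at least one outgoing edge, let n = |V| ≥ 1 and let v_0 ∈ V. Then G has a Hamiltonian cycle (a cycle visiting every vertex exactly once) if and only if the game (𝒢, v_0) has a positional Nash equilibrium with payoff ≥ (1, 1/n, (n−1)/n), i.e. with expected payoff ≥ 1 for player 0, ≥ 1/n for player 1 and ≥ (n−1)/n for player 2. -/

import Mathlib

open MeasureTheory Filter

noncomputable section

instance : Fact ((0:ℝ) < 1) := ⟨one_pos⟩

/-- The source of randomness used to run strategies: a countable product of circle groups,
which is a compact group, equipped below with its normalised Haar measure.  Under this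
measure the coordinates (read as reals in `[0,1)`) are i.i.d. uniform random variables. -/
abbrev USpace : Type := ℕ → AddCircle (1:ℝ)

/-- The normalised Haar (probability) measure on `USpace`. -/
def uHaar : Measure USpace :=
  ((Measure.addHaar (G := USpace)) Set.univ)⁻¹ • Measure.addHaar

/-- The `n`-th uniform coordinate, as a real number in `[0,1)`. -/
def coordReal (u : USpace) (n : ℕ) : ℝ := ((AddCircle.equivIco 1 0) (u n) : ℝ)

/-- A concurrent game with players `P`, states `S` and actions `A` (all finite and nonempty):
each player `i` has a nonempty set `act i s` of actions available at each state `s`, there is a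
transition function `tr` and a reward function `rew i` for each player. -/
structure ConcurrentGame (P S A : Type) [Fintype P] [Nonempty P] [Fintype S] [Nonempty S]
    [Fintype A] [Nonempty A] : Type where
  act : P → S → Set A
  act_nonempty : ∀ i s, (act i s).Nonempty
  tr : S → (P → A) → S
  rew : P → S → ℝ

/-- A history (without its final state): the list of (state, action profile) pairs seen so far,
in chronological order. -/
abbrev Hist (P S A : Type) := List (S × (P → A))

variable {P S A : Type} [Fintype P] [Nonempty P] [Fintype S] [Nonempty S]
  [Fintype A] [Nonempty A] [DecidableEq P]

namespace ConcurrentGame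

/-- A (randomised) strategy of player `i`: for every history `x` and current state `s`,
a probability distribution on actions, supported on the available actions `act i s`. -/
structure Strategy (G : ConcurrentGame P S A) (i : P) where
  prob : Hist P S A → S → A → ℝ
  nonneg : ∀ x s a, 0 ≤ prob x s a
  sum_one : ∀ x s, ∑ a, prob x s a = 1
  supp : ∀ x s a, prob x s a ≠ 0 → a ∈ G.act i s

variable {G : ConcurrentGame P S A}

/-- A pure strategy: every prescribed distribution is degenerate. -/
def Strategy.IsPure {i : P} (σ : Strategy G i) : Prop := ∀ x s, ∃ a, σ.prob x s a = 1

/-- A stationary strategy: depends only on the current state. -/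
def Strategy.IsStationary {i : P} (σ : Strategy G i) : Prop :=
  ∀ x y s, σ.prob x s = σ.prob y s

/-- A positional strategy: pure and stationary. -/
def Strategy.IsPositional {i : P} (σ : Strategy G i) : Prop :=
  σ.IsPure ∧ σ.IsStationary

end ConcurrentGame

/-- A strategy profile: one strategy for each player. -/
abbrev Profile (G : ConcurrentGame P S A) := ∀ i : P, G.Strategy i

namespace ConcurrentGame

def IsPureProfile {G : ConcurrentGame P S A} (σ : Profile G) : Prop := ∀ i, (σ i).IsPure
def IsStationaryProfile {G : ConcurrentGame P S A} (σ : Profile G) : Prop :=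
  ∀ i, (σ i).IsStationary
def IsPositionalProfile {G : ConcurrentGame P S A} (σ : Profile G) : Prop :=
  ∀ i, (σ i).IsPositional

variable (G : ConcurrentGame P S A)

/-- An action profile is legal at `s` if each player's action is available to her. -/
def Legal (s : S) (a : P → A) : Prop := ∀ i, a i ∈ G.act i s

/-- A play of the game: an infinite sequence of (state, action profile) pairs such that every
action profile is legal and consecutive states are related by the transition function. -/
def IsPlay (π : ℕ → S × (P → A)) : Prop :=
  ∀ n, G.Legal (π n).1 (π n).2 ∧ (π (n + 1)).1 = G.tr (π n).1 (π n).2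

/-- The limit-average (mean) payoff of player `i` along a sequence of states. -/
def payOf (i : P) (ss : ℕ → S) : ℝ :=
  Filter.liminf (fun n : ℕ => (∑ j ∈ Finset.range n, G.rew i (ss j)) / n) Filter.atTop

/-- The probability that profile `a` is played after history `(x, s)` under profile `σ`. -/
def weight (σ : Profile G) (x : Hist P S A) (s : S) (a : P → A) : ℝ :=
  ∏ i, (σ i).prob x s (a i)

/-- cumulative distribution of `f` w.r.t. a fixed enumeration of action profiles. -/
def cum (f : (P → A) → ℝ) (k : ℕ) : ℝ :=
  ∑ b ∈ Finset.univ.filter (fun b => ((Fintype.equivFin (P → A)) b : ℕ) < k), f b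

/-- Sample an action profile from the distribution `f` via inverse-cdf transform of `u ∈ [0,1)`. -/
def pick (f : (P → A) → ℝ) (u : ℝ) : P → A :=
  (Fintype.equivFin (P → A)).symm
    (if h : (Finset.univ.filter
          (fun k : Fin (Fintype.card (P → A)) => cum (P := P) (A := A) f ((k : ℕ) + 1) ≤ u)).card
        < Fintype.card (P → A)
      then ⟨_, h⟩ else ⟨0, Fintype.card_pos⟩)

/-- The history induced from initial state `s₀` by a finite sequence of action profiles. -/
def histOf (s₀ : S) : List (P → A) → Hist P S A × S
  | [] => ([], s₀)
  | a :: l =>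
    let h : Hist P S A × S := histOf (G.tr s₀ a) l
    ((s₀, a) :: h.1, h.2)

/-- The first `n` action profiles of the play run by profile `σ` from `s₀`,
driven by the source of randomness `u`. -/
def samplePrefix (σ : Profile G) (s₀ : S) (u : USpace) : ℕ → List (P → A)
  | 0 => []
  | n + 1 =>
    let l : List (P → A) := samplePrefix σ s₀ u n
    let h : Hist P S A × S := G.histOf s₀ l
    l ++ [pick (G.weight σ h.1 h.2) (coordReal u n)]

/-- The state at time `n` of the play run by `σ` from `s₀` with randomness `u`. -/
def stateAt (σ : Profile G) (s₀ : S) (u : USpace) (n : ℕ) : S :=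
  (G.histOf s₀ (G.samplePrefix σ s₀ u n)).2

/-- The expected (limit-average) payoff of player `i` under the strategy profile `σ`,
starting from `s₀`: the integral of the mean payoff over the induced measure on plays. -/
def expPay (σ : Profile G) (s₀ : S) (i : P) : ℝ :=
  ∫ u, G.payOf i (G.stateAt σ s₀ u) ∂uHaar

/-- The probability that the play under `σ` from `s₀` ever visits the set `T` of states. -/
def probVisit (σ : Profile G) (s₀ : S) (T : Set S) : ℝ :=
  (uHaar {u | ∃ n, G.stateAt σ s₀ u n ∈ T}).toReal

/-- A Nash equilibrium: no player can increase her expected payoff by unilaterally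
switching to another strategy. -/
def IsNash (σ : Profile G) (s₀ : S) : Prop :=
  ∀ (i : P) (τ : G.Strategy i),
    G.expPay (Function.update σ i τ) s₀ i ≤ G.expPay σ s₀ i

/-- `pval i s`: the least payoff the coalition of all other players can inflict on player `i`
using pure strategy profiles, when the game starts at `s`. -/
def pval (i : P) (s : S) : ℝ :=
  ⨅ σ : {σ : Profile G // IsPureProfile σ}, ⨆ τ : G.Strategy i,
    G.expPay (Function.update σ.1 i τ) s i

/-- A state is terminal if every legal action profile leads back to it. -/
def Terminal (s : S) : Prop := ∀ a, G.Legal s a → G.tr s a = s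

/-- A terminal-reward game: non-zero rewards occur only at terminal states. -/
def IsTerminalReward : Prop := ∀ (i : P) (s : S), ¬ G.Terminal s → G.rew i s = 0

/-- `a` is `z`-secure at `s`: `a` is legal at `s`, and whenever a single player `i` deviates to
some available action `b`, the resulting state has `pval i ≤ z i`. -/
def zSecure (z : P → EReal) (s : S) (a : P → A) : Prop :=
  G.Legal s a ∧
    ∀ (i : P), ∀ b ∈ G.act i s, (G.pval i (G.tr s (Function.update a i b)) : EReal) ≤ z i

/-- The edge relation of the graph `G(z)`: an edge from `s` to `t` iff some `z`-secure action
profile at `s` leads to `t`. -/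
def secureEdge (z : P → EReal) (s t : S) : Prop :=
  ∃ a, G.zSecure z s a ∧ G.tr s a = t

end ConcurrentGame

end

/-! ## Statement: Hamiltonian cycles vs. positional Nash equilibria -/

noncomputable section

/-- The three-player turn-based game built from a directed graph `(V, E)` and `v₀ ∈ V`:
the states are the vertices, all controlled by player 0 (players 1 and 2 have only the trivial
action of staying put available, player 0 chooses a successor of the current vertex).
Player 0 receives reward 1 at every state, player 1 receives reward 1 at `v₀` and 0 elsewhere,
and player 2 receives reward 0 at `v₀` and 1 elsewhere. -/
def hamGame {V : Type} [Fintype V] [DecidableEq V] [Nonempty V]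
    (E : V → V → Prop) [DecidableRel E] (hout : ∀ v, ∃ w, E v w) (v₀ : V) :
    ConcurrentGame (Fin 3) V V where
  act i v := if i = 0 then {w | E v w} else {v}
  act_nonempty i v := by
    by_cases h : i = 0
    · simpa [h, Set.Nonempty] using hout v
    · simp [h]
  tr v a := if E v (a 0) then a 0 else v
  rew i v :=
    if i = 0 then 1
    else if i = 1 then (if v = v₀ then 1 else 0)
    else (if v = v₀ then 0 else 1)

section Helpers
open Finset
set_option linter.unusedSectionVars false



lemma coordReal_mem (u : USpace) (n : ℕ) : coordReal u n ∈ Set.Ico (0:ℝ) 1 := by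
  have h1 : (0:ℝ) ≤ coordReal u n := ((AddCircle.equivIco 1 0) (u n)).2.1
  have h2 : coordReal u n < 0 + 1 := ((AddCircle.equivIco 1 0) (u n)).2.2
  exact ⟨h1, by linarith⟩

variable {P S A : Type} [Fintype P] [Nonempty P] [Fintype S] [Nonempty S]
  [Fintype A] [Nonempty A] [DecidableEq P] [DecidableEq A]



lemma cum_pointMass [DecidableEq (P → A)] (b : P → A) (k : ℕ) :
    ConcurrentGame.cum (P := P) (A := A) (fun a => if a = b then 1 else 0) k
      = if ((Fintype.equivFin (P → A)) b : ℕ) < k then 1 else 0 := by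
  rw [ConcurrentGame.cum, Finset.sum_ite_eq' _ b]
  simp

lemma pick_pointMass [DecidableEq (P → A)] (b : P → A) (u : ℝ) (h0 : 0 ≤ u) (h1 : u < 1) :
    ConcurrentGame.pick (fun a => if a = b then 1 else 0) u = b := by
  have hset : (Finset.univ.filter
      (fun k : Fin (Fintype.card (P → A)) =>
        ConcurrentGame.cum (P := P) (A := A) (fun a => if a = b then 1 else 0) ((k : ℕ) + 1) ≤ u))
        = Finset.Iio ((Fintype.equivFin (P → A)) b) := by
    ext k
    rw [Finset.mem_filter, cum_pointMass, Finset.mem_Iio, Fin.lt_def]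
    constructor
    · rintro ⟨-, h⟩
      by_contra hk
      push_neg at hk
      rw [if_pos (by omega)] at h
      linarith
    · intro h
      refine ⟨Finset.mem_univ _, ?_⟩
      rw [if_neg (by omega)]
      exact h0
  rw [ConcurrentGame.pick, hset, Fin.card_Iio]
  rw [dif_pos ((Fintype.equivFin (P → A)) b).isLt]
  simp

namespace ConcurrentGame
variable {G : ConcurrentGame P S A}

lemma prob_eq_pointMass {i : P} (σ : G.Strategy i) {x : Hist P S A} {s : S} {a : A}
    (h : σ.prob x s a = 1) (b : A) : σ.prob x s b = if b = a then 1 else 0 := by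
  by_cases hb : b = a
  · simp [hb, h]
  · rw [if_neg hb]
    by_contra h0
    have hlt : 0 < σ.prob x s b := lt_of_le_of_ne (σ.nonneg x s b) (Ne.symm h0)
    have hsum : σ.prob x s a + σ.prob x s b ≤ ∑ c, σ.prob x s c := by
      have h2 := Finset.add_sum_erase Finset.univ (σ.prob x s) (Finset.mem_univ a)
      calc σ.prob x s a + σ.prob x s b
          ≤ σ.prob x s a + ∑ c ∈ Finset.univ.erase a, σ.prob x s c := by
            refine add_le_add (le_refl _) ?_
            exact Finset.single_le_sum (fun c _ => σ.nonneg x s c)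
              (Finset.mem_erase.mpr ⟨hb, Finset.mem_univ b⟩)
        _ = ∑ c, σ.prob x s c := h2
    rw [σ.sum_one x s, h] at hsum
    linarith

lemma weight_pointMass (σ : Profile G) (x : Hist P S A) (s : S)
    (c : P → A) (hc : ∀ i, (σ i).prob x s (c i) = 1) :
    G.weight σ x s = fun a => if a = c then 1 else 0 := by
  funext a
  rw [ConcurrentGame.weight]
  by_cases ha : a = c
  · subst ha
    simp [hc]
  · rw [if_neg ha]
    obtain ⟨i, hi⟩ : ∃ i, a i ≠ c i := Function.ne_iff.mp ha
    refine Finset.prod_eq_zero (Finset.mem_univ i) ?_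
    rw [prob_eq_pointMass (σ i) (hc i), if_neg hi]

lemma histOf_snd_append (G : ConcurrentGame P S A) (l : List (P → A)) (s₀ : S) (a : P → A) :
    (G.histOf s₀ (l ++ [a])).2 = G.tr (G.histOf s₀ l).2 a := by
  induction l generalizing s₀ with
  | nil => simp [ConcurrentGame.histOf]
  | cons b l ih => simp [ConcurrentGame.histOf, ih]

/-- key determinism lemma -/
lemma stateAt_pointMass (σ : Profile G) (c : P → S → A)
    (hc : ∀ i x s, (σ i).prob x s (c i s) = 1) (s₀ : S) (u : USpace) (n : ℕ) :
    G.stateAt σ s₀ u n = (fun s => G.tr s (fun i => c i s))^[n] s₀ := by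
  induction n with
  | zero => simp [ConcurrentGame.stateAt, ConcurrentGame.samplePrefix, ConcurrentGame.histOf]
  | succ n ih =>
    have hsp : G.samplePrefix σ s₀ u (n+1) = G.samplePrefix σ s₀ u n ++
        [ConcurrentGame.pick (G.weight σ (G.histOf s₀ (G.samplePrefix σ s₀ u n)).1
          (G.histOf s₀ (G.samplePrefix σ s₀ u n)).2) (coordReal u n)] := rfl
    rw [ConcurrentGame.stateAt, hsp, histOf_snd_append]
    have hw := weight_pointMass σ (G.histOf s₀ (G.samplePrefix σ s₀ u n)).1
      (G.histOf s₀ (G.samplePrefix σ s₀ u n)).2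
      (fun i => c i (G.histOf s₀ (G.samplePrefix σ s₀ u n)).2) (fun i => hc i _ _)
    rw [hw, pick_pointMass _ _ (coordReal_mem u n).1 (coordReal_mem u n).2]
    have hs : (G.histOf s₀ (G.samplePrefix σ s₀ u n)).2 = G.stateAt σ s₀ u n := rfl
    rw [hs, ih, Function.iterate_succ_apply']

end ConcurrentGame



lemma sum_shift_periodic (g : ℕ → ℝ) (n : ℕ) (hp : ∀ j, g (j + n) = g j) (a : ℕ) :
    ∑ j ∈ Finset.range n, g (a + j) = ∑ j ∈ Finset.range n, g j := by
  induction a with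
  | zero => simp
  | succ a ih =>
    have h1 : ∑ j ∈ Finset.range n, g (a + 1 + j) = ∑ j ∈ Finset.range n, g (a + j + 1) := by
      refine Finset.sum_congr rfl fun j _ => ?_
      ring_nf
    have h2 : ∑ j ∈ Finset.range (n + 1), g (a + j)
        = ∑ j ∈ Finset.range n, g (a + j + 1) + g (a + 0) := Finset.sum_range_succ' _ n
    have h3 : ∑ j ∈ Finset.range (n + 1), g (a + j)
        = ∑ j ∈ Finset.range n, g (a + j) + g (a + n) := Finset.sum_range_succ _ n
    have h4 : g (a + n) = g (a + 0) := by rw [add_zero]; exact hp a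
    rw [h1]
    rw [h2] at h3
    rw [← ih]
    linarith

lemma sum_periodic_decomp (g : ℕ → ℝ) (n : ℕ) (hp : ∀ j, g (j + n) = g j) (q r : ℕ) :
    ∑ j ∈ Finset.range (q * n + r), g j
      = q * (∑ j ∈ Finset.range n, g j) + ∑ j ∈ Finset.range r, g j := by
  induction q with
  | zero => simp
  | succ q ih =>
    have hle : q * n + r ≤ (q + 1) * n + r := by nlinarith
    have := Finset.sum_range_add_sum_Ico g hle
    have hIco : ∑ j ∈ Finset.Ico (q * n + r) ((q+1) * n + r), g j
        = ∑ j ∈ Finset.range n, g ((q * n + r) + j) := by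
      have : (q+1) * n + r = (q * n + r) + n := by ring
      rw [this, Finset.sum_Ico_eq_sum_range]
      simp
    rw [hIco, sum_shift_periodic g n hp] at this
    rw [← this, ih]
    push_cast
    ring

lemma periodic_avg_tendsto (g : ℕ → ℝ) (n : ℕ) (hn : 0 < n) (hp : ∀ j, g (j + n) = g j) :
    Tendsto (fun m : ℕ => (∑ j ∈ Finset.range m, g j) / m) atTop
      (nhds ((∑ j ∈ Finset.range n, g j) / n)) := by
  set Sn := ∑ j ∈ Finset.range n, g j with hSn
  set B := ∑ j ∈ Finset.range n, |g j| with hB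
  have hB0 : 0 ≤ B := Finset.sum_nonneg fun _ _ => abs_nonneg _
  have hn' : (n:ℝ) ≠ 0 := Nat.cast_ne_zero.mpr hn.ne'
  have key : ∀ m : ℕ, 1 ≤ m →
      ‖(∑ j ∈ Finset.range m, g j) / m - Sn / n‖ ≤ (B + |Sn|) / m := by
    intro m hm
    have hm0 : (0:ℝ) < m := by exact_mod_cast hm
    have hm' : (m:ℝ) ≠ 0 := hm0.ne'
    set q := m / n with hq
    set r := m % n with hr
    have hrlt : r < n := Nat.mod_lt _ hn
    have hdm : m = q * n + r := by rw [hq, hr, mul_comm]; exact (Nat.div_add_mod m n).symm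
    have hsum : ∑ j ∈ Finset.range m, g j
        = q * Sn + ∑ j ∈ Finset.range r, g j := by
      conv_lhs => rw [hdm]
      exact sum_periodic_decomp g n hp q r
    set hr2 := ∑ j ∈ Finset.range r, g j with hhr2
    have habs : |hr2| ≤ B := by
      calc |hr2| ≤ ∑ j ∈ Finset.range r, |g j| := Finset.abs_sum_le_sum_abs _ _
        _ ≤ B := Finset.sum_le_sum_of_subset_of_nonneg
            (Finset.range_subset_range.mpr hrlt.le) (fun _ _ _ => abs_nonneg _)
    have hqcast : (m:ℝ) = q * n + r := by exact_mod_cast congrArg (Nat.cast (R := ℝ)) hdm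
    have hexp : (∑ j ∈ Finset.range m, g j) / m - Sn / n
        = (hr2 - r * (Sn / n)) / m := by
      have hm2 : ((q:ℝ) * n + r) ≠ 0 := by rw [← hqcast]; exact hm'
      rw [hsum, hqcast]
      field_simp
      ring
    rw [hexp]
    rw [Real.norm_eq_abs, abs_div, abs_of_pos hm0]
    have h5 : |hr2 - (r:ℝ) * (Sn / n)| ≤ B + |Sn| := by
      have h6 : |hr2 - (r:ℝ) * (Sn / n)| ≤ |hr2| + |(r:ℝ) * (Sn / n)| := abs_sub _ _
      have h7 : |(r:ℝ) * (Sn / n)| = r * |Sn| / n := by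
        rw [abs_mul, abs_div, Nat.abs_cast, Nat.abs_cast]
        ring
      have hrn : (r:ℝ) ≤ n := by exact_mod_cast hrlt.le
      have h8 : (r:ℝ) * |Sn| / n ≤ |Sn| := by
        rw [div_le_iff₀ (by positivity)]
        nlinarith [abs_nonneg Sn]
      linarith [h6, h7.le, h7.ge]
    gcongr
  have hz : Tendsto (fun m : ℕ => (∑ j ∈ Finset.range m, g j) / m - Sn / n) atTop (nhds 0) := by
    refine squeeze_zero_norm' ?_ (tendsto_const_div_atTop_nhds_zero_nat (B + |Sn|))
    filter_upwards [Filter.eventually_ge_atTop 1] with m hm using key m hm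
  have := hz.add_const (Sn / n)
  simpa using this



instance uHaar_prob : IsProbabilityMeasure uHaar := by
  constructor
  rw [uHaar]
  simp only [Measure.smul_apply, smul_eq_mul]
  refine ENNReal.inv_mul_cancel ?_ ?_
  · exact isOpen_univ.measure_ne_zero Measure.addHaar Set.univ_nonempty
  · exact (isCompact_univ.measure_lt_top).ne

section Ham
variable {V : Type} [Fintype V] [DecidableEq V] [Nonempty V]
    (E : V → V → Prop) [DecidableRel E] (hout : ∀ v, ∃ w, E v w) (v₀ : V)

lemma ham_rew_zero (v : V) : (hamGame E hout v₀).rew 0 v = 1 := by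
  simp [hamGame]

lemma ham_rew_one (v : V) : (hamGame E hout v₀).rew 1 v = if v = v₀ then 1 else 0 := by
  simp [hamGame]

lemma ham_rew_two (v : V) : (hamGame E hout v₀).rew 2 v = if v = v₀ then 0 else 1 := by
  have h0 : (2 : Fin 3) ≠ 0 := by decide
  have h1 : (2 : Fin 3) ≠ 1 := by decide
  simp [hamGame, h0, h1]

lemma ham_act_ne_zero {i : Fin 3} (hi : i ≠ 0) (v : V) :
    (hamGame E hout v₀).act i v = {v} := by
  simp [hamGame, hi]

lemma ham_act_zero (v : V) : (hamGame E hout v₀).act 0 v = {w | E v w} := by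
  simp [hamGame]

lemma ham_tr (v : V) (a : Fin 3 → V) :
    (hamGame E hout v₀).tr v a = if E v (a 0) then a 0 else v := rfl

end Ham




section Ham
variable {V : Type} [Fintype V] [DecidableEq V] [Nonempty V]
    (E : V → V → Prop) [DecidableRel E] (hout : ∀ v, ∃ w, E v w) (v₀ : V)

/-- payoff along a periodic play -/
lemma payOf_periodic {P S A : Type} [Fintype P] [Nonempty P] [Fintype S] [Nonempty S]
    [Fintype A] [Nonempty A] [DecidableEq P] (G : ConcurrentGame P S A) (i : P)
    (ss : ℕ → S) (q : ℕ) (hq : 0 < q) (hper : ∀ j, ss (j + q) = ss j) :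
    G.payOf i ss = (∑ j ∈ Finset.range q, G.rew i (ss j)) / q := by
  rw [ConcurrentGame.payOf]
  exact (periodic_avg_tendsto (fun j => G.rew i (ss j)) q hq (fun j => by simp only [hper])).liminf_eq

/-- player 0 gets payoff 1 along any play -/
lemma ham_payOf_zero (ss : ℕ → V) : (hamGame E hout v₀).payOf 0 ss = 1 := by
  rw [ConcurrentGame.payOf]
  have h : ∀ᶠ m : ℕ in atTop,
      (∑ j ∈ Finset.range m, (hamGame E hout v₀).rew 0 (ss j)) / m = 1 := by
    filter_upwards [Filter.eventually_ge_atTop 1] with m hm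
    have hm' : (m:ℝ) ≠ 0 := by positivity
    simp only [ham_rew_zero, Finset.sum_const, Finset.card_range, nsmul_eq_mul, mul_one]
    field_simp
  exact (Tendsto.congr' (EventuallyEq.symm h) tendsto_const_nhds).liminf_eq

/-- payoffs of players 1, 2 along a simple cycle through v₀ of length q -/
lemma ham_payOf_cycle (step : V → V) (q : ℕ) (hq : 0 < q) (hfix : step^[q] v₀ = v₀)
    (hdist : ∀ j < q, ∀ k < q, step^[j] v₀ = step^[k] v₀ → j = k) :
    (hamGame E hout v₀).payOf 1 (fun j => step^[j] v₀) = 1 / q ∧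
    (hamGame E hout v₀).payOf 2 (fun j => step^[j] v₀) = ((q:ℝ) - 1) / q := by
  have hper : ∀ j, step^[j + q] v₀ = step^[j] v₀ := fun j => by
    rw [Function.iterate_add_apply, hfix]
  have honly : ∀ j < q, (step^[j] v₀ = v₀ ↔ j = 0) := by
    intro j hj
    constructor
    · intro h
      exact hdist j hj 0 hq (by simpa using h)
    · rintro rfl; rfl
  constructor
  · rw [payOf_periodic _ _ _ q hq hper]
    congr 1
    have : ∀ j ∈ Finset.range q,
        (hamGame E hout v₀).rew 1 (step^[j] v₀) = if j = 0 then 1 else 0 := by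
      intro j hj
      rw [ham_rew_one]
      simp only [Finset.mem_range] at hj
      by_cases h : j = 0
      · simp [h, honly j hj |>.mpr h]
      · rw [if_neg h, if_neg (fun hc => h ((honly j hj).mp hc))]
    rw [Finset.sum_congr rfl this, Finset.sum_ite_eq' _ 0]
    simp [Finset.mem_range.mpr hq]
  · rw [payOf_periodic _ _ _ q hq hper]
    congr 1
    have : ∀ j ∈ Finset.range q,
        (hamGame E hout v₀).rew 2 (step^[j] v₀) = 1 - (if j = 0 then 1 else 0) := by
      intro j hj
      rw [ham_rew_two]
      simp only [Finset.mem_range] at hj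
      by_cases h : j = 0
      · simp [h, honly j hj |>.mpr h]
      · rw [if_neg (fun hc => h ((honly j hj).mp hc)), if_neg h]; ring
    rw [Finset.sum_congr rfl this, Finset.sum_sub_distrib, Finset.sum_ite_eq' _ 0]
    simp [Finset.mem_range.mpr hq]

/-- any strategy of a player other than 0 is the forced point mass -/
lemma ham_forced {i : Fin 3} (hi : i ≠ 0) (τ : (hamGame E hout v₀).Strategy i)
    (x : Hist (Fin 3) V V) (s : V) (a : V) :
    τ.prob x s a = if a = s then 1 else 0 := by
  have hss : τ.prob x s s = 1 := by
    have hz : ∀ b, b ≠ s → τ.prob x s b = 0 := by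
      intro b hb
      by_contra h0
      have := τ.supp x s b h0
      rw [ham_act_ne_zero E hout v₀ hi] at this
      exact hb this
    have := τ.sum_one x s
    rwa [Finset.sum_eq_single s (fun b _ hb => hz b hb) (by simp)] at this
  exact ConcurrentGame.prob_eq_pointMass τ hss a

end Ham




variable {P S A : Type} [Fintype P] [Nonempty P] [Fintype S] [Nonempty S]
  [Fintype A] [Nonempty A] [DecidableEq P] [DecidableEq A]

namespace ConcurrentGame
variable {G : ConcurrentGame P S A}

lemma expPay_eq_payOf (σ : Profile G) (c : P → S → A)
    (hc : ∀ i x s, (σ i).prob x s (c i s) = 1) (s₀ : S) (i : P) :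
    G.expPay σ s₀ i = G.payOf i (fun j => (fun s => G.tr s (fun i => c i s))^[j] s₀) := by
  rw [ConcurrentGame.expPay]
  have h : (fun u : USpace => G.payOf i (G.stateAt σ s₀ u))
      = fun _ : USpace => G.payOf i (fun j => (fun s => G.tr s (fun i => c i s))^[j] s₀) := by
    funext u
    congr 1
    funext j
    exact stateAt_pointMass σ c hc s₀ u j
  rw [h, integral_const]
  simp

lemma expPay_congr_weight (σ σ' : Profile G)
    (hw : ∀ x s, G.weight σ x s = G.weight σ' x s) (s₀ : S) (i : P) :
    G.expPay σ s₀ i = G.expPay σ' s₀ i := by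
  have hsp : ∀ u n, G.samplePrefix σ s₀ u n = G.samplePrefix σ' s₀ u n := by
    intro u n
    induction n with
    | zero => rfl
    | succ n ih =>
      show G.samplePrefix σ s₀ u n ++ _ = G.samplePrefix σ' s₀ u n ++ _
      rw [ih, hw]
  rw [ConcurrentGame.expPay, ConcurrentGame.expPay]
  congr 1
  funext u
  congr 1
  funext n
  rw [ConcurrentGame.stateAt, ConcurrentGame.stateAt, hsp]

lemma expPay_const_rew (σ : Profile G) (s₀ : S) (i : P) (r : ℝ) (hr : ∀ s, G.rew i s = r) :
    G.expPay σ s₀ i = r := by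
  rw [ConcurrentGame.expPay]
  have h : (fun u : USpace => G.payOf i (G.stateAt σ s₀ u)) = fun _ : USpace => r := by
    funext u
    rw [ConcurrentGame.payOf]
    have he : ∀ᶠ m : ℕ in atTop,
        (∑ j ∈ Finset.range m, G.rew i (G.stateAt σ s₀ u j)) / m = r := by
      filter_upwards [Filter.eventually_ge_atTop 1] with m hm
      have hm' : (m:ℝ) ≠ 0 := by positivity
      simp only [hr, Finset.sum_const, Finset.card_range, nsmul_eq_mul]
      field_simp
    exact (Tendsto.congr' (EventuallyEq.symm he) tendsto_const_nhds).liminf_eq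
  rw [h, integral_const]
  simp

end ConcurrentGame

end Helpers

/-- For a finite directed graph `G = (V, E)` in which every vertex has an outgoing edge,
`n = |V| ≥ 1` and `v₀ ∈ V`: `G` has a Hamiltonian cycle iff the associated game has a
positional Nash equilibrium from `v₀` with payoff at least `(1, 1/n, (n-1)/n)`. -/
theorem hamiltonian_iff_positional_nash {V : Type} [Fintype V] [DecidableEq V] [Nonempty V]
    (E : V → V → Prop) [DecidableRel E] (hout : ∀ v, ∃ w, E v w) (v₀ : V) :
    (∃ f : ZMod (Fintype.card V) → V, Function.Bijective f ∧ ∀ k, E (f k) (f (k + 1)))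
      ↔ ∃ σ : Profile (hamGame E hout v₀), ConcurrentGame.IsPositionalProfile σ ∧
          (hamGame E hout v₀).IsNash σ v₀ ∧
          1 ≤ (hamGame E hout v₀).expPay σ v₀ 0 ∧
          1 / (Fintype.card V : ℝ) ≤ (hamGame E hout v₀).expPay σ v₀ 1 ∧
          ((Fintype.card V : ℝ) - 1) / (Fintype.card V : ℝ) ≤ (hamGame E hout v₀).expPay σ v₀ 2 := by
  classical
  have hn0 : 0 < Fintype.card V := Fintype.card_pos
  haveI : NeZero (Fintype.card V) := ⟨hn0.ne'⟩
  set n := Fintype.card V with hn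
  constructor
  · rintro ⟨f, hbij, hedge⟩
    set e : ZMod n ≃ V := Equiv.ofBijective f hbij with he
    set nxt : V → V := fun v => f (e.symm v + 1) with hnxt
    have hfeq : ∀ k : ZMod n, e k = f k := fun k => rfl
    have hfe : ∀ k : ZMod n, e.symm (f k) = k := fun k => by
      rw [← hfeq]; exact e.symm_apply_apply k
    have hEnxt : ∀ v, E v (nxt v) := by
      intro v
      have hv : f (e.symm v) = v := by rw [← hfeq]; exact e.apply_symm_apply v
      have := hedge (e.symm v)
      rwa [hv] at this
    set c : Fin 3 → V → V := fun i s => if i = 0 then nxt s else s with hcdef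
    have hcact : ∀ i s, c i s ∈ (hamGame E hout v₀).act i s := by
      intro i s
      by_cases hi : i = 0
      · subst hi
        rw [ham_act_zero]
        simpa [hcdef] using hEnxt s
      · rw [ham_act_ne_zero E hout v₀ hi]
        simp [hcdef, hi]
    set σ : Profile (hamGame E hout v₀) := fun i =>
      { prob := fun _ s a => if a = c i s then 1 else 0
        nonneg := by
          intros x s a
          show (0:ℝ) ≤ if a = c i s then 1 else 0
          split <;> norm_num
        sum_one := by
          intro x s
          show (∑ a, if a = c i s then (1:ℝ) else 0) = 1
          rw [Finset.sum_ite_eq' Finset.univ (c i s) (fun _ => (1:ℝ))]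
          simp
        supp := by
          intro x s a h
          have ha : a = c i s := by
            by_contra hcc
            exact h (if_neg hcc)
          rw [ha]; exact hcact i s } with hσdef
    have hc : ∀ (i : Fin 3) (x : Hist (Fin 3) V V) (s : V), (σ i).prob x s (c i s) = 1 := by
      intro i x s; simp [hσdef]
    have hstep : (fun s => (hamGame E hout v₀).tr s (fun i => c i s)) = nxt := by
      funext s
      rw [ham_tr]
      have h0 : c 0 s = nxt s := by simp [hcdef]
      rw [h0, if_pos (hEnxt s)]
    have hiter : ∀ j : ℕ, nxt^[j] v₀ = f (e.symm v₀ + (j : ZMod n)) := by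
      intro j
      induction j with
      | zero =>
        simp only [Function.iterate_zero, id_eq, Nat.cast_zero, add_zero]
        rw [← hfeq]; exact (e.apply_symm_apply v₀).symm
      | succ j ih =>
        rw [Function.iterate_succ_apply', ih]
        have : nxt (f (e.symm v₀ + (j:ZMod n))) = f ((e.symm v₀ + (j:ZMod n)) + 1) := by
          show f (e.symm (f (e.symm v₀ + (j:ZMod n))) + 1) = _
          rw [hfe]
        rw [this]
        congr 1
        push_cast
        ring
    have hfix : nxt^[n] v₀ = v₀ := by
      rw [hiter, ZMod.natCast_self, add_zero, ← hfeq]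
      exact e.apply_symm_apply v₀
    have hdist : ∀ j < n, ∀ k < n, nxt^[j] v₀ = nxt^[k] v₀ → j = k := by
      intro j hj k hk hjk
      rw [hiter, hiter] at hjk
      have h1 : e.symm v₀ + (j : ZMod n) = e.symm v₀ + (k : ZMod n) := hbij.1 hjk
      have h2 : (j : ZMod n) = (k : ZMod n) := by
        exact add_left_cancel h1
      calc j = (j : ZMod n).val := (ZMod.val_cast_of_lt hj).symm
        _ = (k : ZMod n).val := by rw [h2]
        _ = k := ZMod.val_cast_of_lt hk
    have hexp : ∀ i, (hamGame E hout v₀).expPay σ v₀ i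
        = (hamGame E hout v₀).payOf i (fun j => nxt^[j] v₀) := by
      intro i
      rw [ConcurrentGame.expPay_eq_payOf σ c hc, hstep]
    have hpay := ham_payOf_cycle E hout v₀ nxt n hn0 hfix hdist
    refine ⟨σ, ?_, ?_, ?_, ?_, ?_⟩
    · intro i
      exact ⟨fun x s => ⟨c i s, by simp [hσdef]⟩, fun x y s => rfl⟩
    · intro i τ
      by_cases hi : i = 0
      · subst hi
        rw [ConcurrentGame.expPay_const_rew _ v₀ 0 1 (ham_rew_zero E hout v₀),
          ConcurrentGame.expPay_const_rew _ v₀ 0 1 (ham_rew_zero E hout v₀)]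
      · have hwe : ∀ x s, (hamGame E hout v₀).weight (Function.update σ i τ) x s
            = (hamGame E hout v₀).weight σ x s := by
          intro x s
          funext a
          rw [ConcurrentGame.weight, ConcurrentGame.weight]
          refine Finset.prod_congr rfl fun j _ => ?_
          by_cases hj : j = i
          · subst hj
            rw [Function.update_self]
            rw [ham_forced E hout v₀ hi τ, ham_forced E hout v₀ hi (σ j)]
          · rw [Function.update_of_ne hj]
        exact le_of_eq (ConcurrentGame.expPay_congr_weight _ σ hwe v₀ i)
    · rw [hexp 0, ham_payOf_zero]
    · rw [hexp 1, hpay.1]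
    · rw [hexp 2, hpay.2]
  · rintro ⟨σ, hpos, hnash, hp0, hp1, hp2⟩
    set c : Fin 3 → V → V := fun i s => Classical.choose ((hpos i).1 [] s) with hcdef
    have hc : ∀ (i : Fin 3) (x : Hist (Fin 3) V V) (s : V), (σ i).prob x s (c i s) = 1 := by
      intro i x s
      have h1 : (σ i).prob [] s (c i s) = 1 := Classical.choose_spec ((hpos i).1 [] s)
      rw [(hpos i).2 x [] s]
      exact h1
    have hE : ∀ s, E s (c 0 s) := by
      intro s
      have h1 : (σ 0).prob [] s (c 0 s) = 1 := hc 0 [] s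
      have h2 := (σ 0).supp [] s (c 0 s) (by rw [h1]; norm_num)
      rwa [ham_act_zero] at h2
    set step : V → V := fun s => (hamGame E hout v₀).tr s (fun i => c i s) with hstepdef
    have hstepc : ∀ s, step s = c 0 s := by
      intro s
      show (hamGame E hout v₀).tr s (fun i => c i s) = c 0 s
      rw [ham_tr, if_pos (hE s)]
    have hEstep : ∀ s, E s (step s) := fun s => by rw [hstepc]; exact hE s
    have hexp : ∀ i, (hamGame E hout v₀).expPay σ v₀ i
        = (hamGame E hout v₀).payOf i (fun j => step^[j] v₀) := by
      intro i
      exact ConcurrentGame.expPay_eq_payOf σ c hc v₀ i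
    rw [hexp 1] at hp1
    rw [hexp 2] at hp2
    have hn' : (0:ℝ) < n := by exact_mod_cast hn0
    have hrec : ∃ m, 0 < m ∧ step^[m] v₀ = v₀ := by
      by_contra hno
      push_neg at hno
      have hsum : ∀ m, 1 ≤ m →
          (∑ j ∈ Finset.range m, (hamGame E hout v₀).rew 1 (step^[j] v₀)) = 1 := by
        intro m hm
        rw [Finset.sum_eq_single_of_mem 0 (Finset.mem_range.mpr hm)]
        · rw [Function.iterate_zero, id_eq, ham_rew_one, if_pos rfl]
        · intro j hj hj0
          rw [ham_rew_one, if_neg (hno j (Nat.pos_of_ne_zero hj0))]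
      have htend : Tendsto
          (fun m : ℕ => (∑ j ∈ Finset.range m, (hamGame E hout v₀).rew 1 (step^[j] v₀)) / m)
          atTop (nhds 0) := by
        refine squeeze_zero_norm' ?_ tendsto_one_div_atTop_nhds_zero_nat
        filter_upwards [Filter.eventually_ge_atTop 1] with m hm
        have hm' : (0:ℝ) < m := by exact_mod_cast hm
        rw [hsum m hm, Real.norm_eq_abs, abs_of_nonneg (by positivity)]
      have hzero : (hamGame E hout v₀).payOf 1 (fun j => step^[j] v₀) = 0 := by
        rw [ConcurrentGame.payOf]
        exact htend.liminf_eq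
      rw [hzero] at hp1
      have : (0:ℝ) < 1 / n := by positivity
      linarith
    set q := Nat.find hrec with hqdef
    obtain ⟨hq0, hqfix⟩ : 0 < q ∧ step^[q] v₀ = v₀ := Nat.find_spec hrec
    have hqmin : ∀ m, m < q → ¬(0 < m ∧ step^[m] v₀ = v₀) := fun m hm => Nat.find_min hrec hm
    have hdist : ∀ j < q, ∀ k < q, step^[j] v₀ = step^[k] v₀ → j = k := by
      have key : ∀ j k, j < k → k < q → step^[j] v₀ = step^[k] v₀ → False := by
        intro j k hjk hk h
        have h1 : step^[q - k + j] v₀ = v₀ := by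
          have e1 : step^[q - k] (step^[k] v₀) = v₀ := by
            rw [← Function.iterate_add_apply, Nat.sub_add_cancel hk.le]
            exact hqfix
          rw [← h, ← Function.iterate_add_apply] at e1
          exact e1
        exact hqmin _ (by omega) ⟨by omega, h1⟩
      intro j hj k hk h
      rcases lt_trichotomy j k with h' | h' | h'
      · exact absurd h (fun hh => key j k h' hk hh)
      · exact h'
      · exact absurd h.symm (fun hh => key k j h' hj hh)
    have hpay := ham_payOf_cycle E hout v₀ step q hq0 hqfix hdist
    rw [hpay.1] at hp1
    rw [hpay.2] at hp2
    have hq' : (0:ℝ) < q := by exact_mod_cast hq0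
    have hq_le : q ≤ n := by
      rw [div_le_div_iff₀ hn' hq'] at hp1
      have : (q:ℝ) ≤ n := by linarith
      exact_mod_cast this
    have hn_le : n ≤ q := by
      rw [div_le_div_iff₀ hn' hq'] at hp2
      have : (n:ℝ) ≤ q := by nlinarith
      exact_mod_cast this
    have hqn : q = n := le_antisymm hq_le hn_le
    rw [hqn] at hqfix hdist
    have hmul : ∀ t, step^[n * t] v₀ = v₀ := by
      intro t
      induction t with
      | zero => simp
      | succ t ih =>
        rw [Nat.mul_succ, Function.iterate_add_apply, hqfix, ih]
    have hmod : ∀ m : ℕ, step^[m % n] v₀ = step^[m] v₀ := by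
      intro m
      conv_rhs => rw [← Nat.mod_add_div m n]
      rw [Function.iterate_add_apply, hmul]
    refine ⟨fun k => step^[(k : ZMod n).val] v₀, ?_, ?_⟩
    · have hinj : Function.Injective (fun k : ZMod n => step^[(k : ZMod n).val] v₀) := by
        intro k k' h
        have hv : (k : ZMod n).val = (k' : ZMod n).val :=
          hdist _ (ZMod.val_lt k) _ (ZMod.val_lt k') h
        have h1 : ((k : ZMod n).val : ZMod n) = ((k' : ZMod n).val : ZMod n) := by rw [hv]
        rwa [ZMod.natCast_rightInverse k, ZMod.natCast_rightInverse k'] at h1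
      refine (Fintype.bijective_iff_injective_and_card _).mpr ⟨hinj, ?_⟩
      rw [ZMod.card]
    · intro k
      have hcast : ∀ k : ZMod n, ((k.val : ℕ) : ZMod n) = k := fun k =>
        ZMod.natCast_rightInverse k
      have hnext : step^[((k + 1 : ZMod n)).val] v₀ = step (step^[(k : ZMod n).val] v₀) := by
        have e1 : ((k.val + 1 : ℕ) : ZMod n) = k + 1 := by
          push_cast
          rw [hcast]
        rw [← e1, ZMod.val_natCast, hmod, Function.iterate_succ_apply']
      show E (step^[(k : ZMod n).val] v₀) (step^[((k + 1 : ZMod n)).val] v₀)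
      rw [hnext]
      exact hEstep _

end
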